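/- The function f(r) = r^l · ₁F₁(λ + l/2; l + 3/2; −r²/4), where ₁F₁ is Kummer's confluent hypergeometric function, solves the ODE f'' + (2/r + r/2)f' − (l(l+1)/r²)f + λf = 0 on (0,∞). -/

import Mathlib

noncomputable section

/-- Kummer's confluent hypergeometric function
`₁F₁(a; b; z) = Σ_{n≥0} (a)ₙ zⁿ / ((b)ₙ n!)`, with `(a)ₙ` the (ascending)
Pochhammer symbol. -/
def hyp1F1 (a b z : ℝ) : ℝ :=
  ∑' n : ℕ, ((ascPochhammer ℝ n).eval a / ((ascPochhammer ℝ n).eval b * n.factorial)) * z ^ n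

open Filter Finset

namespace S8

def cc (a b : ℝ) (n : ℕ) : ℝ :=
  (ascPochhammer ℝ n).eval a / ((ascPochhammer ℝ n).eval b * n.factorial)

-- (b)_n ≥ n! when b ≥ 1
lemma poch_ge (b : ℝ) (hb : 1 ≤ b) (n : ℕ) :
    (n.factorial : ℝ) ≤ (ascPochhammer ℝ n).eval b := by
  induction n with
  | zero => simp
  | succ n ih =>
    rw [ascPochhammer_succ_eval, Nat.factorial_succ]
    push_cast
    have h1 : (0:ℝ) < n.factorial := by positivity
    have : ((n:ℝ) + 1) ≤ b + n := by linarith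
    calc ((n:ℝ)+1) * n.factorial ≤ (b + n) * (ascPochhammer ℝ n).eval b := by
          apply mul_le_mul this ih (le_of_lt h1) (by linarith [Nat.cast_nonneg (α := ℝ) n])
      _ = (ascPochhammer ℝ n).eval b * (b + n) := by ring

lemma poch_pos (b : ℝ) (hb : 1 ≤ b) (n : ℕ) : 0 < (ascPochhammer ℝ n).eval b :=
  lt_of_lt_of_le (by positivity) (poch_ge b hb n)

-- |(a)_n| ≤ (m+n)!/m! with m = ⌈|a|⌉₊
lemma poch_abs_le (a : ℝ) (n : ℕ) :
    |(ascPochhammer ℝ n).eval a| ≤ ((⌈|a|⌉₊ + n).factorial : ℝ) / (⌈|a|⌉₊.factorial : ℝ) := by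
  set m := ⌈|a|⌉₊
  have hm : |a| ≤ m := Nat.le_ceil _
  have hmf : (0:ℝ) < m.factorial := by positivity
  induction n with
  | zero => simp [le_div_iff₀ hmf]
  | succ n ih =>
    rw [ascPochhammer_succ_eval, abs_mul]
    have h1 : |a + n| ≤ (m:ℝ) + n + 1 := by
      calc |a + n| ≤ |a| + n := by simpa using abs_add_le a (n:ℝ)
        _ ≤ (m:ℝ) + n + 1 := by linarith
    calc |(ascPochhammer ℝ n).eval a| * |a + (n:ℝ)|
        ≤ (((m + n).factorial : ℝ) / m.factorial) * ((m:ℝ) + n + 1) := by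
          apply mul_le_mul ih h1 (abs_nonneg _) (by positivity)
      _ = ((m + (n+1)).factorial : ℝ) / m.factorial := by
          rw [show m + (n+1) = (m+n) + 1 by ring, Nat.factorial_succ]
          push_cast
          field_simp

lemma choose_le_two_pow (n k : ℕ) : n.choose k ≤ 2 ^ n := by
  rcases le_or_gt k n with h | h
  · calc n.choose k ≤ ∑ i ∈ range (n+1), n.choose i :=
        Finset.single_le_sum (fun i _ => Nat.zero_le _) (by simp [Nat.lt_succ_of_le h])
      _ = 2 ^ n := Nat.sum_range_choose n
  · simp [Nat.choose_eq_zero_of_lt h]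

-- master bound
lemma cc_bound (a b : ℝ) (hb : 1 ≤ b) (n : ℕ) :
    |cc a b n| ≤ (2:ℝ) ^ (⌈|a|⌉₊ + n) / n.factorial := by
  set m := ⌈|a|⌉₊
  have hbp := poch_pos b hb n
  have hbn := poch_ge b hb n
  have hnf : (0:ℝ) < n.factorial := by positivity
  have hden : (0:ℝ) < (ascPochhammer ℝ n).eval b * n.factorial := by positivity
  rw [cc, abs_div, abs_of_pos hden]
  have h1 : |(ascPochhammer ℝ n).eval a| ≤ ((m + n).factorial : ℝ) / m.factorial :=
    poch_abs_le a n
  have h2 : ((m+n).factorial : ℝ) / m.factorial ≤ 2 ^ (m+n) * n.factorial := by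
    have hc : ((m+n).choose n) ≤ 2 ^ (m+n) := choose_le_two_pow _ _
    have := Nat.choose_mul_factorial_mul_factorial (Nat.le_add_left n m)
    -- (m+n).choose n * n! * (m+n-n)! = (m+n)!
    have hsub : m + n - n = m := by omega
    rw [hsub] at this
    have : ((m+n).factorial : ℝ) = ((m+n).choose n : ℝ) * n.factorial * m.factorial := by
      exact_mod_cast this.symm
    rw [this]
    have hmf : (0:ℝ) < m.factorial := by positivity
    rw [mul_div_assoc, div_self (ne_of_gt hmf), mul_one]
    have : ((m+n).choose n : ℝ) ≤ 2 ^ (m+n) := by exact_mod_cast hc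
    nlinarith
  calc |(ascPochhammer ℝ n).eval a| / ((ascPochhammer ℝ n).eval b * n.factorial)
      ≤ (2 ^ (m+n) * n.factorial) / ((ascPochhammer ℝ n).eval b * n.factorial) := by
        gcongr
        exact h1.trans h2
    _ ≤ (2 ^ (m+n) * n.factorial) / (n.factorial * n.factorial) := by
        apply div_le_div_of_nonneg_left (by positivity) (by positivity)
        apply mul_le_mul_of_nonneg_right hbn (le_of_lt hnf)
    _ = 2 ^ (m+n) / n.factorial := by
        field_simp

end S8

namespace S8b
open S8 Metric

lemma sq_le (n : ℕ) : ((n:ℝ)+1)^2 ≤ 4^n := by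
  induction n with
  | zero => norm_num
  | succ n ih =>
    have h4 : (0:ℝ) < 4 ^ n := by positivity
    have hn : (0:ℝ) ≤ n := Nat.cast_nonneg n
    push_cast
    calc ((n:ℝ)+1+1)^2 ≤ 4 * ((n:ℝ)+1)^2 := by nlinarith
      _ ≤ 4 * 4^n := by linarith
      _ = 4 ^ (n+1) := by rw [pow_succ]; ring

lemma master (a b R : ℝ) (hb : 1 ≤ b) (hR : 0 ≤ R) :
    Summable (fun n : ℕ => |cc a b n| * ((n:ℝ)+1)^2 * R^n) := by
  apply Summable.of_nonneg_of_le (fun n => by positivity) (fun n => ?_)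
    ((Real.summable_pow_div_factorial (8*R)).mul_left ((2:ℝ)^(⌈|a|⌉₊)))
  have h1 : |cc a b n| ≤ (2:ℝ) ^ (⌈|a|⌉₊ + n) / n.factorial := cc_bound a b hb n
  have h2 : ((n:ℝ)+1)^2 ≤ 4^n := sq_le n
  have hnf : (0:ℝ) < n.factorial := by positivity
  calc |cc a b n| * ((n:ℝ)+1)^2 * R^n
      ≤ ((2:ℝ) ^ (⌈|a|⌉₊ + n) / n.factorial) * (4:ℝ)^n * R^n := by
        gcongr
    _ = (2:ℝ)^(⌈|a|⌉₊) * ((8*R)^n / n.factorial) := by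
        rw [pow_add, show ((8:ℝ)*R)^n = 2^n * (4^n * R^n) by
          rw [show (8:ℝ)*R = 2*(4*R) by ring, mul_pow, mul_pow]]
        field_simp

-- term bounds
lemma bound0 (a b R x : ℝ) (hx : |x| ≤ R) (n : ℕ) :
    ‖cc a b n * x ^ n‖ ≤ |cc a b n| * ((n:ℝ)+1)^2 * R^n := by
  have h0 : (0:ℝ) ≤ R := le_trans (abs_nonneg x) hx
  have h1 : |x|^n ≤ R^n := pow_le_pow_left₀ (abs_nonneg x) hx n
  have h2 : (1:ℝ) ≤ ((n:ℝ)+1)^2 := by nlinarith [Nat.cast_nonneg (α := ℝ) n]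
  rw [Real.norm_eq_abs, abs_mul, abs_pow]
  have h3 : |x|^n ≤ ((n:ℝ)+1)^2 * R^n :=
    le_trans h1 (le_mul_of_one_le_left (by positivity) h2)
  calc |cc a b n| * |x|^n ≤ |cc a b n| * (((n:ℝ)+1)^2 * R^n) :=
        mul_le_mul_of_nonneg_left h3 (abs_nonneg _)
    _ = _ := by ring

lemma bound1 (a b R x : ℝ) (hR : 1 ≤ R) (hx : |x| ≤ R) (n : ℕ) :
    ‖cc a b n * ((n:ℝ) * x ^ (n-1))‖ ≤ |cc a b n| * ((n:ℝ)+1)^2 * R^n := by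
  have h0 : (0:ℝ) < R := lt_of_lt_of_le one_pos hR
  have h1 : |x|^(n-1) ≤ R^n :=
    le_trans (pow_le_pow_left₀ (abs_nonneg x) hx _) (pow_le_pow_right₀ hR (Nat.sub_le n 1))
  have h2 : (n:ℝ) ≤ ((n:ℝ)+1)^2 := by nlinarith [Nat.cast_nonneg (α := ℝ) n]
  rw [Real.norm_eq_abs, abs_mul, abs_mul, abs_pow, Nat.abs_cast]
  calc |cc a b n| * ((n:ℝ) * |x|^(n-1)) ≤ |cc a b n| * (((n:ℝ)+1)^2 * R^n) := by
        gcongr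
    _ = _ := by ring

lemma bound2 (a b R x : ℝ) (hR : 1 ≤ R) (hx : |x| ≤ R) (n : ℕ) :
    ‖cc a b n * ((n:ℝ) * (((n-1 : ℕ):ℝ) * x ^ (n-1-1)))‖
      ≤ |cc a b n| * ((n:ℝ)+1)^2 * R^n := by
  have h0 : (0:ℝ) < R := lt_of_lt_of_le one_pos hR
  have h1 : |x|^(n-1-1) ≤ R^n :=
    le_trans (pow_le_pow_left₀ (abs_nonneg x) hx _)
      (pow_le_pow_right₀ hR (le_trans (Nat.sub_le _ 1) (Nat.sub_le n 1)))
  have hc : ((n-1:ℕ):ℝ) ≤ (n:ℝ) := by exact_mod_cast Nat.cast_le.mpr (Nat.sub_le n 1)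
  have h2 : (n:ℝ) * ((n-1:ℕ):ℝ) ≤ ((n:ℝ)+1)^2 := by
    nlinarith [Nat.cast_nonneg (α := ℝ) n, Nat.cast_nonneg (α := ℝ) (n-1)]
  rw [Real.norm_eq_abs, abs_mul, abs_mul, abs_mul, abs_pow, Nat.abs_cast, Nat.abs_cast]
  calc |cc a b n| * ((n:ℝ) * (((n-1:ℕ):ℝ) * |x|^(n-1-1)))
      ≤ |cc a b n| * (((n:ℝ)+1)^2 * R^n) := by
        rw [← mul_assoc ((n:ℝ))]
        gcongr
    _ = _ := by ring

end S8b

namespace S8c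
open S8 S8b Metric

def FF (a b x : ℝ) : ℝ := ∑' n : ℕ, cc a b n * x ^ n
def FF1 (a b x : ℝ) : ℝ := ∑' n : ℕ, cc a b n * ((n:ℝ) * x ^ (n-1))
def FF2 (a b x : ℝ) : ℝ :=
  ∑' n : ℕ, cc a b n * ((n:ℝ) * (((n-1 : ℕ):ℝ) * x ^ (n-1-1)))

variable {a b : ℝ}

lemma hRx (x : ℝ) : (1:ℝ) ≤ |x| + 1 := by linarith [abs_nonneg x]

lemma summ0 (hb : 1 ≤ b) (x : ℝ) : Summable (fun n : ℕ => cc a b n * x ^ n) :=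
  (master a b (|x|+1) hb (by positivity)).of_norm_bounded
    (fun n => bound0 a b _ x (by linarith [abs_nonneg x]) n)

lemma summ1 (hb : 1 ≤ b) (x : ℝ) :
    Summable (fun n : ℕ => cc a b n * ((n:ℝ) * x ^ (n-1))) :=
  (master a b (|x|+1) hb (by positivity)).of_norm_bounded
    (fun n => bound1 a b _ x (hRx x) (by linarith [abs_nonneg x]) n)

lemma summ2 (hb : 1 ≤ b) (x : ℝ) :
    Summable (fun n : ℕ => cc a b n * ((n:ℝ) * (((n-1 : ℕ):ℝ) * x ^ (n-1-1)))) :=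
  (master a b (|x|+1) hb (by positivity)).of_norm_bounded
    (fun n => bound2 a b _ x (hRx x) (by linarith [abs_nonneg x]) n)

lemma hasDeriv_FF (hb : 1 ≤ b) (x : ℝ) : HasDerivAt (FF a b) (FF1 a b x) x := by
  have hmem : x ∈ ball (0:ℝ) (|x|+1) := by
    simp [mem_ball, Real.dist_eq]
  exact hasDerivAt_tsum_of_isPreconnected
    (master a b (|x|+1) hb (by positivity)) isOpen_ball
    (convex_ball (0:ℝ) (|x|+1)).isPreconnected
    (fun n y _ => ((hasDerivAt_pow n y).const_mul (cc a b n)))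
    (fun n y hy => bound1 a b _ y (hRx x)
      (le_of_lt (by simpa [mem_ball, Real.dist_eq] using hy)) n)
    hmem (summ0 hb x) hmem

lemma hasDeriv_FF1 (hb : 1 ≤ b) (x : ℝ) : HasDerivAt (FF1 a b) (FF2 a b x) x := by
  have hmem : x ∈ ball (0:ℝ) (|x|+1) := by
    simp [mem_ball, Real.dist_eq]
  exact hasDerivAt_tsum_of_isPreconnected
    (master a b (|x|+1) hb (by positivity)) isOpen_ball
    (convex_ball (0:ℝ) (|x|+1)).isPreconnected
    (fun n y _ => (((hasDerivAt_pow (n-1) y).const_mul ((n:ℝ))).const_mul (cc a b n)))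
    (fun n y hy => bound2 a b _ y (hRx x)
      (le_of_lt (by simpa [mem_ball, Real.dist_eq] using hy)) n)
    hmem (summ1 hb x) hmem

end S8c

namespace S8d
open S8 S8b S8c Filter Finset Topology

variable {a b : ℝ}

lemma ckey (hb : 1 ≤ b) (n : ℕ) :
    cc a b (n+1) * (((n:ℝ)+1) * (b+n)) = cc a b n * (a+n) := by
  have h1 : (0:ℝ) < (ascPochhammer ℝ n).eval b := poch_pos b hb n
  have h2 : (0:ℝ) < b + n := by have := Nat.cast_nonneg (α := ℝ) n; linarith
  have h3 : (0:ℝ) < (n.factorial : ℝ) := by positivity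
  rw [cc, cc, ascPochhammer_succ_eval, ascPochhammer_succ_eval, Nat.factorial_succ]
  push_cast
  field_simp

def hh (a b x : ℝ) (n : ℕ) : ℝ := cc a b n * n * ((n:ℝ) - 1 + b) * x^(n-1)

lemma summ_hh (hb : 1 ≤ b) (x : ℝ) : Summable (hh a b x) := by
  set R := |x| + 1 with hRdef
  have hR1 : (1:ℝ) ≤ R := hRx x
  have hR0 : (0:ℝ) < R := by linarith
  apply ((master a b R hb hR0.le).mul_left b).of_norm_bounded
  intro n
  have hxR : |x| ≤ R := by simp [hRdef]
  have h1 : |x|^(n-1) ≤ R^n :=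
    le_trans (pow_le_pow_left₀ (abs_nonneg x) hxR _) (pow_le_pow_right₀ hR1 (Nat.sub_le n 1))
  have hb0 : (0:ℝ) < b := by linarith
  have hn0 : (0:ℝ) ≤ (n:ℝ) := Nat.cast_nonneg n
  have h2 : |(n:ℝ) - 1 + b| ≤ (n:ℝ) + b := by
    rw [abs_of_nonneg (by linarith)]; linarith
  have hnn : (n:ℝ)*(n:ℝ) ≤ b*((n:ℝ)*(n:ℝ)) := le_mul_of_one_le_left (by positivity) hb
  have h3 : (n:ℝ) * ((n:ℝ) + b) ≤ b * ((n:ℝ)+1)^2 := by nlinarith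
  rw [hh, Real.norm_eq_abs, abs_mul, abs_mul, abs_mul, abs_pow, Nat.abs_cast]
  calc |cc a b n| * (n:ℝ) * |(n:ℝ) - 1 + b| * |x|^(n-1)
      ≤ |cc a b n| * (n:ℝ) * ((n:ℝ) + b) * R^n := by
        gcongr
    _ ≤ b * (|cc a b n| * ((n:ℝ)+1)^2 * R^n) := by
        have := abs_nonneg (cc a b n)
        have hRn : (0:ℝ) ≤ R^n := by positivity
        nlinarith [mul_le_mul_of_nonneg_left h3 (abs_nonneg (cc a b n))]

lemma kummer (hb : 1 ≤ b) (x : ℝ) :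
    x * FF2 a b x + (b - x) * FF1 a b x - a * FF a b x = 0 := by
  have s0 := summ0 (a := a) hb x
  have s1 := summ1 (a := a) hb x
  have s2 := summ2 (a := a) hb x
  have sh := summ_hh (a := a) hb x
  have T : ∀ n : ℕ,
      x * (cc a b n * ((n:ℝ) * (((n-1 : ℕ):ℝ) * x ^ (n-1-1))))
        + (b - x) * (cc a b n * ((n:ℝ) * x ^ (n-1)))
        - a * (cc a b n * x ^ n)
      = hh a b x n - hh a b x (n+1) := by
    intro n
    match n with
    | 0 =>
      have hk := ckey (a := a) hb 0
      simp [hh] at hk ⊢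
      linarith
    | 1 =>
      have hk := ckey (a := a) hb 1
      simp [hh] at hk ⊢
      push_cast at hk ⊢
      linear_combination x * hk
    | (k+2) =>
      have hk := ckey (a := a) hb (k+2)
      simp only [hh, show k+2-1 = k+1 by omega, show k+2-1-1 = k by omega,
        show k+2+1-1 = k+2 by omega, show k+2-1 = k+1 by omega]
      push_cast at hk ⊢
      linear_combination (x^(k+2)) * hk
  have hsum : HasSum
      (fun n : ℕ => x * (cc a b n * ((n:ℝ) * (((n-1 : ℕ):ℝ) * x ^ (n-1-1))))
        + (b - x) * (cc a b n * ((n:ℝ) * x ^ (n-1)))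
        - a * (cc a b n * x ^ n))
      (x * FF2 a b x + (b - x) * FF1 a b x - a * FF a b x) :=
    ((s2.hasSum.mul_left x).add (s1.hasSum.mul_left (b-x))).sub (s0.hasSum.mul_left a)
  have hfe : (fun n : ℕ => x * (cc a b n * ((n:ℝ) * (((n-1 : ℕ):ℝ) * x ^ (n-1-1))))
        + (b - x) * (cc a b n * ((n:ℝ) * x ^ (n-1)))
        - a * (cc a b n * x ^ n))
      = fun n => hh a b x n - hh a b x (n+1) := funext T
  rw [hfe] at hsum
  have hts : Tendsto (hh a b x) atTop (𝓝 0) := sh.tendsto_atTop_zero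
  have h0 : hh a b x 0 = 0 := by simp [hh]
  have tl : Tendsto (fun N => ∑ i ∈ range N, (hh a b x i - hh a b x (i+1)))
      atTop (𝓝 0) := by
    simp only [Finset.sum_range_sub' (hh a b x)]
    simpa [h0] using (tendsto_const_nhds (x := hh a b x 0)).sub hts
  exact tendsto_nhds_unique hsum.tendsto_sum_nat tl

end S8d


open S8 S8b S8c S8d

/-- `f(r) = r^l · ₁F₁(λ + l/2; l + 3/2; −r²/4)` solves
`f'' + (2/r + r/2)f' − (l(l+1)/r²)f + λf = 0` on `(0,∞)`. -/
theorem statement8 (l : ℕ) (hl : 1 ≤ l) (lam : ℝ) :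
    ∀ r : ℝ, 0 < r →
      (deriv (deriv (fun s : ℝ => s ^ l * hyp1F1 (lam + l / 2) (l + 3 / 2) (-s ^ 2 / 4))) r
        + (2 / r + r / 2) *
            deriv (fun s : ℝ => s ^ l * hyp1F1 (lam + l / 2) (l + 3 / 2) (-s ^ 2 / 4)) r
        - ((l : ℝ) * (l + 1) / r ^ 2) *
            (r ^ l * hyp1F1 (lam + l / 2) (l + 3 / 2) (-r ^ 2 / 4))
        + lam * (r ^ l * hyp1F1 (lam + l / 2) (l + 3 / 2) (-r ^ 2 / 4))) = 0 := by
  obtain ⟨k, rfl⟩ : ∃ k, l = k + 1 := ⟨l - 1, by omega⟩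
  intro r hr
  set a : ℝ := lam + (↑(k+1) : ℝ) / 2 with ha
  set b : ℝ := (↑(k+1) : ℝ) + 3 / 2 with hbdef
  have hb : 1 ≤ b := by
    rw [hbdef]; push_cast; linarith [Nat.cast_nonneg (α := ℝ) k]
  have hid : ∀ z : ℝ, hyp1F1 a b z = FF a b z := fun z => rfl
  have hg : ∀ s : ℝ, HasDerivAt (fun t : ℝ => -t ^ 2 / 4) (-(s/2)) s := by
    intro s
    have h := ((hasDerivAt_pow 2 s).fun_neg.div_const 4)
    exact h.congr_deriv (by push_cast; ring)
  have hF := hasDeriv_FF (a := a) hb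
  have hF1 := hasDeriv_FF1 (a := a) hb
  have hf : ∀ s : ℝ, HasDerivAt (fun t : ℝ => t ^ (k+1) * FF a b (-t ^ 2 / 4))
      ((↑(k+1) * s ^ k) * FF a b (-s ^ 2 / 4)
        + s ^ (k+1) * (FF1 a b (-s ^ 2 / 4) * (-(s/2)))) s := by
    intro s
    exact (hasDerivAt_pow (k+1) s).mul ((hF (-s ^ 2 / 4)).comp (h₂ := FF a b) s (hg s))
  have hderiv1 : deriv (fun t : ℝ => t ^ (k+1) * FF a b (-t ^ 2 / 4))
      = fun s => (↑(k+1) * s ^ k) * FF a b (-s ^ 2 / 4)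
        + s ^ (k+1) * (FF1 a b (-s ^ 2 / 4) * (-(s/2))) :=
    funext fun s => (hf s).deriv
  have H2 : HasDerivAt (fun s : ℝ => (↑(k+1) * s ^ k) * FF a b (-s ^ 2 / 4)
        + s ^ (k+1) * (FF1 a b (-s ^ 2 / 4) * (-(s/2))))
      ((↑(k+1) * (↑k * r ^ (k-1))) * FF a b (-r ^ 2 / 4)
        + (↑(k+1) * r ^ k) * (FF1 a b (-r ^ 2 / 4) * (-(r/2)))
        + ((↑(k+1) * r ^ k) * (FF1 a b (-r ^ 2 / 4) * (-(r/2)))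
          + r ^ (k+1) * ((FF2 a b (-r ^ 2 / 4) * (-(r/2))) * (-(r/2))
            + FF1 a b (-r ^ 2 / 4) * (-(1/2))))) r := by
    have A := (hasDerivAt_pow k r).const_mul ((↑(k+1) : ℝ))
    have B := (hF (-r ^ 2 / 4)).comp r (hg r)
    have E := (hF1 (-r ^ 2 / 4)).comp r (hg r)
    have G : HasDerivAt (fun s : ℝ => -(s/2)) (-(1/2)) r := by
      have := ((hasDerivAt_id r).div_const 2).fun_neg
      simpa using this
    exact (A.mul B).add ((hasDerivAt_pow (k+1) r).mul (E.mul G))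
  simp only [hid]
  rw [hderiv1, H2.deriv]
  beta_reduce
  have hrne : r ≠ 0 := ne_of_gt hr
  have hz : (-r ^ 2 / 4 : ℝ) ≠ 0 := by
    simp only [neg_div, ne_eq, neg_eq_zero, div_eq_zero_iff]
    push_neg
    exact ⟨pow_ne_zero 2 hrne, by norm_num⟩
  have K := kummer (a := a) hb (-r ^ 2 / 4)
  have hF2eq : FF2 a b (-r ^ 2 / 4)
      = (a * FF a b (-r ^ 2 / 4) - (b - (-r ^ 2 / 4)) * FF1 a b (-r ^ 2 / 4)) / (-r ^ 2 / 4) := by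
    rw [eq_div_iff hz]
    linarith [K]
  have hk1 : (↑k : ℝ) * r ^ (k-1) = ↑k * r ^ k / r := by
    cases k with
    | zero => simp
    | succ m =>
      rw [show m + 1 - 1 = m by omega, pow_succ]
      field_simp
  rw [hF2eq, hk1, hbdef, ha]
  push_cast
  field_simp
  ring
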